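/- Let n ≥ 2 and let ρ : ℝ → (0,∞) be a C¹, 2π-periodic function satisfying the closure conditions and the G_n-symmetries ρ(−θ) = ρ(θ) and ρ(θ + 2π/n) = ρ(θ) (so ρ'(0) = 0). Fix b ∈ ℝ and define, for θ ∈ (0, π/n], Π(θ) = −b + ∫₀^θ sin β/ρ(β) dβ + (cos θ/ sin θ) ∫₀^θ cos β/ρ(β) dβ (the ordinate of the intersection of the normal line at C(θ) with the vertical axis). Then for θ ∈ (0, π/n), Π'(θ) = −(1/sin² θ) ∫₀^θ ρ'(β) sin β / ρ(β)² dβ; in particular, if ρ is non-increasing on [0, π/n], then Π is non-decreasing on (0, π/n]. Moreover Π'(θ) → 0 as θ → 0⁺, so Π extends to a C¹ function on [0, π/n] with Π(0) = −b + 1/ρ(0). -/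

import Mathlib

open Real Set Filter MeasureTheory Topology

noncomputable section


private lemma stmt16_alg (s c r C : ℝ) (hs : s ≠ 0) (hr : r ≠ 0) (h1 : s ^ 2 + c ^ 2 = 1) :
    -(1 / s ^ 2) * (C - s / r) = 0 + s / r + (-(1 / s ^ 2) * C + c / s * (c / r)) := by
  field_simp
  ring_nf
  linear_combination (-s) * h1

/-- For a `C¹` positive `2π`-periodic curvature function with the
`G_n`-symmetries, the function `Π(θ)` (ordinate of the intersection of the normal line
at `C(θ)` with the vertical axis) satisfies
`Π'(θ) = −(1/sin²θ) ∫₀^θ ρ'(β) sin β/ρ(β)² dβ` on `(0, π/n)`; in particular if `ρ` is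
non-increasing on `[0, π/n]` then `Π` is non-decreasing on `(0, π/n]`; moreover
`Π'(θ) → 0` as `θ → 0⁺`, so `Π` extends to a `C¹` function on `[0, π/n]` with
`Π(0) = −b + 1/ρ(0)`. -/
theorem stmt16 (n : ℕ) (hn : 2 ≤ n) (ρ : ℝ → ℝ)
    (hρ : ContDiff ℝ 1 ρ) (hpos : ∀ θ, 0 < ρ θ)
    (hper : ∀ θ, ρ (θ + 2 * π) = ρ θ)
    (hc : (∫ θ in (0:ℝ)..(2 * π), Real.cos θ / ρ θ) = 0)
    (hc' : (∫ θ in (0:ℝ)..(2 * π), Real.sin θ / ρ θ) = 0)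
    (hsym : ∀ θ : ℝ, ρ (-θ) = ρ θ)
    (hsymn : ∀ θ : ℝ, ρ (θ + 2 * π / n) = ρ θ)
    (b : ℝ) (Pf : ℝ → ℝ)
    (hPf : ∀ θ : ℝ, Pf θ =
      -b + (∫ β in (0:ℝ)..θ, Real.sin β / ρ β) +
        (Real.cos θ / Real.sin θ) * ∫ β in (0:ℝ)..θ, Real.cos β / ρ β) :
    (∀ θ ∈ Ioo (0:ℝ) (π / n),
      HasDerivAt Pf
        (-(1 / (Real.sin θ) ^ 2) * ∫ β in (0:ℝ)..θ, deriv ρ β * Real.sin β / (ρ β) ^ 2)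
        θ) ∧
    (AntitoneOn ρ (Icc (0:ℝ) (π / n)) → MonotoneOn Pf (Ioc (0:ℝ) (π / n))) ∧
    Tendsto (deriv Pf) (𝓝[>] (0:ℝ)) (𝓝 0) ∧
    ∃ Pbar : ℝ → ℝ, ContDiffOn ℝ 1 Pbar (Icc (0:ℝ) (π / n)) ∧
      (∀ θ ∈ Ioc (0:ℝ) (π / n), Pbar θ = Pf θ) ∧
      Pbar 0 = -b + 1 / ρ 0 := by
  -- basic facts
  have hρc : Continuous ρ := hρ.continuous
  have hρd : Differentiable ℝ ρ := hρ.differentiable one_ne_zero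
  have hρ' : Continuous (deriv ρ) := hρ.continuous_deriv le_rfl
  have hne : ∀ θ, ρ θ ≠ 0 := fun θ => (hpos θ).ne'
  have hcC : Continuous fun β => Real.cos β / ρ β := continuous_cos.div hρc hne
  have hcS : Continuous fun β => Real.sin β / ρ β := continuous_sin.div hρc hne
  have hcg : Continuous fun β => deriv ρ β * Real.sin β / ρ β ^ 2 :=
    (hρ'.mul continuous_sin).div (hρc.pow 2) fun β => pow_ne_zero 2 (hne β)
  set S : ℝ → ℝ := fun θ => ∫ β in (0:ℝ)..θ, Real.sin β / ρ β with hSdef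
  set Cf : ℝ → ℝ := fun θ => ∫ β in (0:ℝ)..θ, Real.cos β / ρ β with hCdef
  set g : ℝ → ℝ := fun θ => ∫ β in (0:ℝ)..θ, deriv ρ β * Real.sin β / ρ β ^ 2 with hgdef
  have hS : ∀ θ, HasDerivAt S (Real.sin θ / ρ θ) θ := fun θ =>
    intervalIntegral.integral_hasDerivAt_right (hcS.intervalIntegrable 0 θ)
      (hcS.stronglyMeasurableAtFilter _ _) hcS.continuousAt
  have hC : ∀ θ, HasDerivAt Cf (Real.cos θ / ρ θ) θ := fun θ =>
    intervalIntegral.integral_hasDerivAt_right (hcC.intervalIntegrable 0 θ)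
      (hcC.stronglyMeasurableAtFilter _ _) hcC.continuousAt
  have hg : ∀ θ, HasDerivAt g (deriv ρ θ * Real.sin θ / ρ θ ^ 2) θ := fun θ =>
    intervalIntegral.integral_hasDerivAt_right (hcg.intervalIntegrable 0 θ)
      (hcg.stronglyMeasurableAtFilter _ _) hcg.continuousAt
  -- key identity : g θ = Cf θ - sin θ / ρ θ
  have key : ∀ θ, g θ = Cf θ - Real.sin θ / ρ θ := by
    intro θ
    have hq : ∀ β ∈ uIcc (0:ℝ) θ, HasDerivAt (fun t => Real.sin t / ρ t)
        (Real.cos β / ρ β - deriv ρ β * Real.sin β / ρ β ^ 2) β := by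
      intro β _
      have := (Real.hasDerivAt_sin β).div ((hρd β).hasDerivAt) (hne β)
      refine this.congr_deriv ?_
      have hβ := hne β
      field_simp
    have hint : (∫ β in (0:ℝ)..θ, (Real.cos β / ρ β - deriv ρ β * Real.sin β / ρ β ^ 2))
        = Real.sin θ / ρ θ - Real.sin 0 / ρ 0 :=
      intervalIntegral.integral_eq_sub_of_hasDerivAt hq ((hcC.sub hcg).intervalIntegrable 0 θ)
    rw [intervalIntegral.integral_sub (hcC.intervalIntegrable 0 θ)
      (hcg.intervalIntegrable 0 θ)] at hint
    rw [Real.sin_zero, zero_div, sub_zero] at hint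
    linarith
  -- derivative of Pf wherever sin θ ≠ 0
  have hPfD : ∀ θ : ℝ, Real.sin θ ≠ 0 → HasDerivAt Pf (-(1 / Real.sin θ ^ 2) * g θ) θ := by
    intro θ hs
    have hPfe : Pf = fun t => -b + S t + (Real.cos t / Real.sin t) * Cf t := funext hPf
    rw [hPfe]
    have hcot : HasDerivAt (fun t => Real.cos t / Real.sin t) (-(1 / Real.sin θ ^ 2)) θ := by
      have := (Real.hasDerivAt_cos θ).div (Real.hasDerivAt_sin θ) hs
      refine this.congr_deriv ?_
      have h1 := Real.sin_sq_add_cos_sq θ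
      field_simp
      linarith
    have hD := ((hasDerivAt_const θ (-b)).add (hS θ)).add (hcot.mul (hC θ))
    refine hD.congr_deriv ?_
    rw [key θ]
    exact (stmt16_alg _ _ _ _ hs (hne θ) (Real.sin_sq_add_cos_sq θ)).symm
  -- bounds on π / n
  have hnpos : (0:ℝ) < n := by positivity
  have hn2 : (2:ℝ) ≤ n := by exact_mod_cast hn
  have hc0 : (0:ℝ) < π / n := by positivity
  have hhalf : π / n ≤ π / 2 := by
    apply div_le_div_of_nonneg_left pi_pos.le (by norm_num) hn2
  have hsinpos : ∀ θ : ℝ, 0 < θ → θ ≤ π / 2 → 0 < Real.sin θ := fun θ h1 h2 =>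
    Real.sin_pos_of_pos_of_lt_pi h1 (lt_of_le_of_lt h2 (by linarith [pi_pos]))
  have hsinne : ∀ θ ∈ Ioc (0:ℝ) (π / n), Real.sin θ ≠ 0 := fun θ hθ =>
    (hsinpos θ hθ.1 (hθ.2.trans hhalf)).ne'
  -- part 1
  have part1 : ∀ θ ∈ Ioo (0:ℝ) (π / n),
      HasDerivAt Pf (-(1 / (Real.sin θ) ^ 2) *
        ∫ β in (0:ℝ)..θ, deriv ρ β * Real.sin β / (ρ β) ^ 2) θ := by
    intro θ hθ
    exact hPfD θ (hsinne θ ⟨hθ.1, hθ.2.le⟩)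
  -- deriv ρ 0 = 0
  have hd0 : deriv ρ 0 = 0 := by
    have h1 : HasDerivAt ρ (deriv ρ 0) 0 := (hρd 0).hasDerivAt
    have h2 : HasDerivAt (fun t : ℝ => ρ (-t)) (deriv ρ 0 * (-1)) 0 := by
      have hneg : HasDerivAt (fun t : ℝ => -t) (-1 : ℝ) 0 := (hasDerivAt_neg 0)
      have h1' : HasDerivAt ρ (deriv ρ 0) (-(0:ℝ)) := by rwa [neg_zero]
      exact h1'.comp 0 hneg
    have h3 : (fun t : ℝ => ρ (-t)) = ρ := funext hsym
    rw [h3] at h2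
    have := h1.unique h2
    linarith
  -- g θ ≤ 0 when ρ antitone
  have hgle : AntitoneOn ρ (Icc (0:ℝ) (π / n)) → ∀ θ ∈ Ioc (0:ℝ) (π / n), g θ ≤ 0 := by
    intro hA θ hθ
    have hmono : Cf θ ≤ ∫ β in (0:ℝ)..θ, Real.cos β / ρ θ := by
      apply intervalIntegral.integral_mono_on hθ.1.le (hcC.intervalIntegrable 0 θ)
        ((continuous_cos.div_const _).intervalIntegrable 0 θ)
      intro β hβ
      have hβn : β ∈ Icc (0:ℝ) (π / n) := ⟨hβ.1, hβ.2.trans hθ.2⟩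
      have hρθβ : ρ θ ≤ ρ β := hA hβn ⟨hθ.1.le, hθ.2⟩ hβ.2
      have hcosβ : 0 ≤ Real.cos β :=
        Real.cos_nonneg_of_mem_Icc ⟨by linarith [hβ.1, pi_pos], by linarith [hβ.2, hθ.2, hhalf]⟩
      gcongr
      exact hpos θ
    have hval : (∫ β in (0:ℝ)..θ, Real.cos β / ρ θ) = Real.sin θ / ρ θ := by
      rw [intervalIntegral.integral_div, integral_cos]
      simp
    rw [key θ]
    rw [hval] at hmono
    linarith
  -- part 2
  have part2 : AntitoneOn ρ (Icc (0:ℝ) (π / n)) → MonotoneOn Pf (Ioc (0:ℝ) (π / n)) := by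
    intro hA
    apply monotoneOn_of_deriv_nonneg (convex_Ioc 0 (π / n))
    · intro θ hθ
      exact (hPfD θ (hsinne θ hθ)).continuousAt.continuousWithinAt
    · intro θ hθ
      rw [interior_Ioc] at hθ
      exact (hPfD θ (hsinne θ ⟨hθ.1, hθ.2.le⟩)).differentiableAt.differentiableWithinAt
    · intro θ hθ
      rw [interior_Ioc] at hθ
      rw [(hPfD θ (hsinne θ ⟨hθ.1, hθ.2.le⟩)).deriv]
      have hg0 : g θ ≤ 0 := hgle hA θ ⟨hθ.1, hθ.2.le⟩
      have : (0:ℝ) ≤ 1 / Real.sin θ ^ 2 := by positivity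
      nlinarith
  -- the limit of the derivative formula
  have hcos0 : ∀ᶠ θ in 𝓝[>] (0:ℝ), θ ∈ Ioo (0:ℝ) (π / 2) :=
    Ioo_mem_nhdsGT_of_mem (Set.left_mem_Ico.2 (by positivity))
  have hg0 : g 0 = 0 := intervalIntegral.integral_same
  have hdivlim : Tendsto (fun θ => g θ / Real.sin θ ^ 2) (𝓝[>] (0:ℝ)) (𝓝 0) := by
    apply HasDerivAt.lhopital_zero_nhdsGT
      (f' := fun θ => deriv ρ θ * Real.sin θ / ρ θ ^ 2)
      (g' := fun θ => 2 * Real.sin θ * Real.cos θ)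
    · exact Eventually.of_forall hg
    · refine Eventually.of_forall fun x => ?_
      have := (Real.hasDerivAt_sin x).pow 2
      refine this.congr_deriv ?_
      simp
    · filter_upwards [hcos0] with θ hθ
      have h1 : 0 < Real.sin θ := Real.sin_pos_of_pos_of_lt_pi hθ.1 (by linarith [pi_pos, hθ.2])
      have h2 : 0 < Real.cos θ := Real.cos_pos_of_mem_Ioo ⟨by linarith [pi_pos, hθ.1], hθ.2⟩
      positivity
    · have ht := (hg 0).continuousAt.tendsto
      rw [hg0] at ht
      exact tendsto_nhdsWithin_of_tendsto_nhds ht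
    · have h1 : Tendsto (fun θ => Real.sin θ ^ 2) (𝓝 0) (𝓝 (Real.sin 0 ^ 2)) :=
        ((continuous_sin.pow 2).tendsto 0)
      simpa using tendsto_nhdsWithin_of_tendsto_nhds h1
    · have hc0' : ContinuousAt (fun θ => deriv ρ θ / (ρ θ ^ 2 * (2 * Real.cos θ))) 0 := by
        apply ContinuousAt.div hρ'.continuousAt
          ((hρc.pow 2).continuousAt.mul (continuous_const.mul continuous_cos).continuousAt)
        simp [hne 0]
      have h0 : deriv ρ 0 / (ρ 0 ^ 2 * (2 * Real.cos 0)) = 0 := by rw [hd0]; simp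
      have ht := hc0'.tendsto
      rw [h0] at ht
      have hcont := tendsto_nhdsWithin_of_tendsto_nhds (s := Ioi (0:ℝ)) ht
      apply Filter.Tendsto.congr' _ hcont
      filter_upwards [hcos0] with θ hθ
      have h1 : Real.sin θ ≠ 0 :=
        (Real.sin_pos_of_pos_of_lt_pi hθ.1 (by linarith [pi_pos, hθ.2])).ne'
      have h2 : Real.cos θ ≠ 0 :=
        (Real.cos_pos_of_mem_Ioo ⟨by linarith [pi_pos, hθ.1], hθ.2⟩).ne'
      have h3 := hne θ
      field_simp
  have hlim : Tendsto (fun θ => -(1 / Real.sin θ ^ 2) * g θ) (𝓝[>] (0:ℝ)) (𝓝 0) := by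
    have heq : (fun θ => -(1 / Real.sin θ ^ 2) * g θ) = fun θ => -(g θ / Real.sin θ ^ 2) := by
      funext θ; ring
    rw [heq]
    simpa using hdivlim.neg
  -- part 3
  have part3 : Tendsto (deriv Pf) (𝓝[>] (0:ℝ)) (𝓝 0) := by
    apply hlim.congr'
    filter_upwards [Ioo_mem_nhdsGT_of_mem (Set.left_mem_Ico.2 hc0)] with θ hθ
    exact ((hPfD θ (hsinne θ ⟨hθ.1, hθ.2.le⟩)).deriv).symm
  refine ⟨part1, part2, part3, ?_⟩
  -- second L'Hopital : Cf θ / sin θ → 1/ρ 0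
  have hCsin : Tendsto (fun θ => Cf θ / Real.sin θ) (𝓝[>] (0:ℝ)) (𝓝 (1 / ρ 0)) := by
    apply HasDerivAt.lhopital_zero_nhdsGT
      (f' := fun θ => Real.cos θ / ρ θ) (g' := fun θ => Real.cos θ)
    · exact Eventually.of_forall hC
    · exact Eventually.of_forall fun x => Real.hasDerivAt_sin x
    · filter_upwards [hcos0] with θ hθ
      exact (Real.cos_pos_of_mem_Ioo ⟨by linarith [pi_pos, hθ.1], hθ.2⟩).ne'
    · have hC0 : Cf 0 = 0 := intervalIntegral.integral_same
      have ht := (hC 0).continuousAt.tendsto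
      rw [hC0] at ht
      exact tendsto_nhdsWithin_of_tendsto_nhds ht
    · have h1 : Tendsto Real.sin (𝓝 0) (𝓝 (Real.sin 0)) := continuous_sin.tendsto 0
      simpa using tendsto_nhdsWithin_of_tendsto_nhds h1
    · have hc0' : ContinuousAt (fun θ => 1 / ρ θ) 0 :=
        continuousAt_const.div hρc.continuousAt (hne 0)
      have hcont := tendsto_nhdsWithin_of_tendsto_nhds (s := Ioi (0:ℝ)) hc0'.tendsto
      apply Filter.Tendsto.congr' _ hcont
      filter_upwards [hcos0] with θ hθ
      have h2 : Real.cos θ ≠ 0 :=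
        (Real.cos_pos_of_mem_Ioo ⟨by linarith [pi_pos, hθ.1], hθ.2⟩).ne'
      have h3 := hne θ
      field_simp
  -- the extension
  set Pbar : ℝ → ℝ := fun θ => if θ = 0 then -b + 1 / ρ 0 else Pf θ with hPbardef
  have hPbarPf : ∀ θ : ℝ, θ ≠ 0 → Pbar θ = Pf θ := fun θ h => if_neg h
  have hPbar0 : Pbar 0 = -b + 1 / ρ 0 := if_pos rfl
  have heqnhds : ∀ θ : ℝ, 0 < θ → Pbar =ᶠ[𝓝 θ] Pf := fun θ h =>
    (eventually_ne_nhds (ne_of_gt h)).mono fun y hy => hPbarPf y hy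
  have hPbarD : ∀ θ ∈ Icc (0:ℝ) (π / n),
      HasDerivWithinAt Pbar (-(1 / Real.sin θ ^ 2) * g θ) (Icc (0:ℝ) (π / n)) θ := by
    intro θ hθ
    rcases eq_or_lt_of_le hθ.1 with h0 | h0
    · subst h0
      have hval : -(1 / Real.sin (0:ℝ) ^ 2) * g 0 = 0 := by simp [hg0]
      rw [hval]
      apply HasDerivWithinAt.mono _ Icc_subset_Ici_self
      apply hasDerivWithinAt_Ici_of_tendsto_deriv (s := Ioo (0:ℝ) (π / n))
      · intro x hx
        exact (((hPfD x (hsinne x ⟨hx.1, hx.2.le⟩)).differentiableAt).congr_of_eventuallyEq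
          (heqnhds x hx.1)).differentiableWithinAt
      · show Tendsto Pbar (𝓝[Ioo (0:ℝ) (π / n)] 0) (𝓝 (Pbar 0))
        have hmono : 𝓝[Ioo (0:ℝ) (π / n)] (0:ℝ) ≤ 𝓝[>] 0 :=
          nhdsWithin_mono 0 Ioo_subset_Ioi_self
        have hSt : Tendsto S (𝓝 (0:ℝ)) (𝓝 0) := by
          have hS0 : S 0 = 0 := intervalIntegral.integral_same
          have ht := (hS 0).continuousAt.tendsto
          rwa [hS0] at ht
        have hcost : Tendsto Real.cos (𝓝 (0:ℝ)) (𝓝 1) := by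
          simpa using continuous_cos.tendsto 0
        have base : Tendsto (fun θ => -b + S θ + Real.cos θ * (Cf θ / Real.sin θ))
            (𝓝[Ioo (0:ℝ) (π / n)] 0) (𝓝 (-b + 0 + 1 * (1 / ρ 0))) := by
          exact ((tendsto_const_nhds.add (tendsto_nhdsWithin_of_tendsto_nhds hSt)).add
            (((tendsto_nhdsWithin_of_tendsto_nhds hcost)).mul (hCsin.mono_left hmono)))
        rw [hPbar0]
        have hval2 : -b + 0 + 1 * (1 / ρ 0) = -b + 1 / ρ 0 := by ring
        rw [hval2] at base
        apply Filter.Tendsto.congr' _ base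
        filter_upwards [self_mem_nhdsWithin] with x hx
        rw [hPbarPf x (ne_of_gt hx.1), hPf x]
        ring
      · exact Ioo_mem_nhdsGT_of_mem (Set.left_mem_Ico.2 hc0)
      · apply part3.congr'
        filter_upwards [self_mem_nhdsWithin] with x hx
        exact (Filter.EventuallyEq.deriv_eq (heqnhds x hx)).symm
    · exact ((hPfD θ (hsinne θ ⟨h0, hθ.2⟩)).congr_of_eventuallyEq
        (heqnhds θ h0)).hasDerivWithinAt
  have hUD : UniqueDiffOn ℝ (Icc (0:ℝ) (π / n)) := uniqueDiffOn_Icc hc0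
  have hdw : ∀ θ ∈ Icc (0:ℝ) (π / n),
      derivWithin Pbar (Icc (0:ℝ) (π / n)) θ = -(1 / Real.sin θ ^ 2) * g θ :=
    fun θ hθ => (hPbarD θ hθ).derivWithin (hUD θ hθ)
  have hDcont : ContinuousOn (fun θ => -(1 / Real.sin θ ^ 2) * g θ) (Icc (0:ℝ) (π / n)) := by
    intro θ hθ
    rcases eq_or_lt_of_le hθ.1 with h0 | h0
    · subst h0
      have h2 : ContinuousWithinAt (fun θ => -(1 / Real.sin θ ^ 2) * g θ) (Ioi 0) 0 := by
        show Tendsto (fun θ => -(1 / Real.sin θ ^ 2) * g θ) (𝓝[>] (0:ℝ))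
          (𝓝 (-(1 / Real.sin (0:ℝ) ^ 2) * g 0))
        have hval : -(1 / Real.sin (0:ℝ) ^ 2) * g 0 = 0 := by simp [hg0]
        rw [hval]
        exact hlim
      exact (h2.insert).mono fun x hx =>
        Set.mem_insert_iff.mpr ((eq_or_lt_of_le hx.1).imp Eq.symm id)
    · apply ContinuousAt.continuousWithinAt
      have hsθ : Real.sin θ ≠ 0 := hsinne θ ⟨h0, hθ.2⟩
      exact ((continuousAt_const.div ((continuous_sin.pow 2).continuousAt)
        (pow_ne_zero 2 hsθ)).neg).mul (hg θ).differentiableAt.continuousAt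
  refine ⟨Pbar, ?_, fun θ hθ => hPbarPf θ (ne_of_gt hθ.1), hPbar0⟩
  have hcd : ContDiffOn ℝ ((0:ℕ) + 1) Pbar (Icc (0:ℝ) (π / n)) := by
    rw [contDiffOn_succ_iff_derivWithin hUD]
    refine ⟨fun θ hθ => (hPbarD θ hθ).differentiableWithinAt, by simp, ?_⟩
    simp only [Nat.cast_zero, contDiffOn_zero]
    exact hDcont.congr hdw
  simpa using hcd

end
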